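/- Let θ be a *-automorphism of a unital C*-algebra A, let ω be a free ultrafilter on ℕ, and suppose the induced automorphism θ^ω of the ultrapower A^ω = ℓ^∞(ℕ,A)/c_ω(A) is inner, implemented by a unitary u = (u_n). If there exist nonzero projections p_n in A and unit-norm positive elements a_n ∈ p_n A p_n with ‖p_n u_n p_n − p_n‖ → 0 and ‖a_n θ(a_n)‖ → 0, then one obtains a contradiction; in particular, a·θ^ω(a) = a² u* ≠ 0 in A^ω where a = (a_n), p = (p_n), while a·θ^ω(a) = 0. -/

import Mathlib

/-- Let `θ` be a *-automorphism of a unital C*-algebra `A` and `ω` a free ultrafilter on `ℕ`.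
Suppose the induced automorphism of the ultrapower `A^ω` is inner, implemented by a unitary
`u = (u n)` (so that `‖u n * x n * (u n)* - θ (x n)‖ → 0` along `ω` for every bounded
sequence `x`).  If there are nonzero projections `p n` and norm-one positive elements
`a n ∈ p n A p n` with `‖p n * u n * p n - p n‖ → 0` and `‖a n * θ (a n)‖ → 0` along `ω`,
then one obtains a contradiction. -/
theorem stmt10 {A : Type} [CStarAlgebra A]
    (θ : A ≃⋆ₐ[ℂ] A)
    (ω : Ultrafilter ℕ) (hfree : (ω : Filter ℕ) ≤ Filter.cofinite)
    (u : ℕ → A) (hu : ∀ n, u n ∈ unitary A)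
    (hinner : ∀ x : ℕ → A, (∃ C, ∀ n, ‖x n‖ ≤ C) →
      Filter.Tendsto (fun n => ‖u n * x n * star (u n) - θ (x n)‖) ω (nhds 0))
    (p : ℕ → A)
    (hproj : ∀ n, IsSelfAdjoint (p n) ∧ p n * p n = p n ∧ p n ≠ 0)
    (a : ℕ → A)
    (hpos : ∀ n, ∃ b, a n = star b * b)
    (hnorm : ∀ n, ‖a n‖ = 1)
    (hcorner : ∀ n, p n * a n * p n = a n)
    (hpu : Filter.Tendsto (fun n => ‖p n * u n * p n - p n‖) ω (nhds 0))
    (haθ : Filter.Tendsto (fun n => ‖a n * θ (a n)‖) ω (nhds 0)) :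
    False := by
  have hsa : ∀ n, star (a n) = a n := by
    intro n
    obtain ⟨b, hb⟩ := hpos n
    rw [hb, star_mul, star_star]
  have hpa : ∀ n, p n * a n = a n := by
    intro n
    conv_lhs => rw [← hcorner n]
    rw [← mul_assoc, ← mul_assoc, (hproj n).2.1, hcorner n]
  have hap : ∀ n, a n * p n = a n := by
    intro n
    conv_lhs => rw [← hcorner n]
    rw [mul_assoc, (hproj n).2.1, hcorner n]
  -- key pointwise inequality
  have key : ∀ n, (1 : ℝ) ≤ ‖a n * θ (a n)‖ + ‖u n * a n * star (u n) - θ (a n)‖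
      + ‖p n * u n * p n - p n‖ := by
    intro n
    have haa : ‖a n * a n‖ = 1 := by
      nth_rewrite 1 [← hsa n]
      rw [CStarRing.norm_star_mul_self, hnorm, one_mul]
    have e1' : a n * (p n * u n * p n) * a n = a n * u n * a n := by
      rw [← mul_assoc (a n) (p n * u n), ← mul_assoc (a n) (p n), hap n,
        mul_assoc (a n * u n), hpa n]
    have e1 : a n * u n * a n - a n * a n = a n * (p n * u n * p n - p n) * a n := by
      rw [mul_sub, sub_mul]
      congr 1
      · exact e1'.symm
      · rw [hap n]
    have h2 : ‖a n * u n * a n - a n * a n‖ ≤ ‖p n * u n * p n - p n‖ := by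
      rw [e1]
      calc ‖a n * (p n * u n * p n - p n) * a n‖
          ≤ ‖a n * (p n * u n * p n - p n)‖ * ‖a n‖ := norm_mul_le _ _
        _ ≤ ‖a n‖ * ‖p n * u n * p n - p n‖ * ‖a n‖ := by
            gcongr; exact norm_mul_le _ _
        _ = ‖p n * u n * p n - p n‖ := by rw [hnorm]; ring
    have h1 : star (u n) * u n = 1 := (Unitary.mem_iff.mp (hu n)).1
    have e2 : a n * u n * a n = a n * (u n * a n * star (u n)) * u n := by
      simp only [mul_assoc, h1, mul_one]
    have e3 : a n * (u n * a n * star (u n)) =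
        a n * θ (a n) + a n * (u n * a n * star (u n) - θ (a n)) := by
      rw [mul_sub]; abel
    have h3 : ‖a n * u n * a n‖ ≤ ‖a n * θ (a n)‖ + ‖u n * a n * star (u n) - θ (a n)‖ := by
      rw [e2, CStarRing.norm_mul_mem_unitary _ (hu n), e3]
      calc ‖a n * θ (a n) + a n * (u n * a n * star (u n) - θ (a n))‖
          ≤ ‖a n * θ (a n)‖ + ‖a n * (u n * a n * star (u n) - θ (a n))‖ := norm_add_le _ _
        _ ≤ ‖a n * θ (a n)‖ + ‖a n‖ * ‖u n * a n * star (u n) - θ (a n)‖ := by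
            gcongr; exact norm_mul_le _ _
        _ = _ := by rw [hnorm, one_mul]
    have h4 : ‖a n * a n‖ ≤ ‖a n * u n * a n‖ + ‖a n * u n * a n - a n * a n‖ := by
      calc ‖a n * a n‖
          = ‖a n * u n * a n - (a n * u n * a n - a n * a n)‖ := by rw [sub_sub_cancel]
        _ ≤ _ := norm_sub_le _ _
    linarith
  have hA : Filter.Tendsto (fun n => ‖a n * θ (a n)‖ + ‖u n * a n * star (u n) - θ (a n)‖
      + ‖p n * u n * p n - p n‖) ω (nhds 0) := by
    have h := (haθ.add (hinner a ⟨1, fun n => (hnorm n).le⟩)).add hpu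
    simpa using h
  have : (1 : ℝ) ≤ 0 := ge_of_tendsto' hA key
  linarith
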